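/- Let q = 5^k with k even. Then for every c in F_{q^2} with c + c^q ≠ 0 and c ∉ F_q, the quantity 3/(s+1), where s = N(c)/Tr(c)^2, is not a fourth power in F_q. -/

import Mathlib

theorem stmt_18 (k : ℕ) (hk : 0 < k) (hke : Even k) (F : Type*) [Field F] [Fintype F]
    (hF : Fintype.card F = (5 ^ k) ^ 2) (c : F) (hTr : c + c ^ (5 ^ k) ≠ 0)
    (hc : c ^ (5 ^ k) ≠ c) :
    ¬ ∃ w : F, w ^ (5 ^ k) = w ∧
      w ^ 4 = 3 / (c * c ^ (5 ^ k) / (c + c ^ (5 ^ k)) ^ 2 + 1) := by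
  rintro ⟨w, hwq, hw⟩
  have hp5 : Fact (Nat.Prime 5) := ⟨by norm_num⟩
  -- characteristic is 5
  have hchar : CharP F 5 := by
    have hP : CharP F (ringChar F) := ringChar.charP F
    obtain ⟨n, hprime, hn⟩ := FiniteField.card F (ringChar F)
    rw [hF] at hn
    have hdvd : ringChar F ∣ 5 ^ (k * 2) := by
      rw [pow_mul, hn]; exact dvd_pow_self _ n.ne_zero
    have : ringChar F = 5 :=
      (Nat.prime_dvd_prime_iff_eq hprime (by norm_num)).mp (hprime.dvd_of_dvd_pow hdvd)
    rwa [this] at hP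
  have h5 : (5 : F) = 0 := by exact_mod_cast CharP.cast_eq_zero F 5
  set cq := c ^ (5 ^ k) with hcq
  -- Frobenius squared is identity
  have hcc : cq ^ (5 ^ k) = c := by
    rw [hcq, ← pow_mul, ← sq, ← hF]
    exact FiniteField.pow_card c
  have hT : (c + cq) ^ (5 ^ k) = c + cq := by
    rw [add_pow_char_pow, ← hcq, hcc]; ring
  have hd : (c - cq) ^ (5 ^ k) = -(c - cq) := by
    rw [sub_pow_char_pow, ← hcq, hcc]; ring
  have hdne : c - cq ≠ 0 := sub_ne_zero.mpr (Ne.symm hc)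
  have h3 : (3 : F) ≠ 0 := by
    intro h
    have : (5 : ℕ) ∣ 3 := by
      have := (CharP.cast_eq_zero_iff F 5 3).mp (by exact_mod_cast h)
      exact this
    norm_num at this
  -- key identity: c*cq + (c+cq)^2 = (c-cq)^2 in char 5
  have hkey : c * cq + (c + cq) ^ 2 = (c - cq) ^ 2 := by
    linear_combination (c * cq) * h5
  have hden : c * cq / (c + cq) ^ 2 + 1 = (c - cq) ^ 2 / (c + cq) ^ 2 := by
    field_simp
    linear_combination hkey
  rw [hden] at hw
  have heq : w ^ 4 * (c - cq) ^ 2 = 3 * (c + cq) ^ 2 := by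
    field_simp at hw
    linear_combination hw
  have hw0 : w ≠ 0 := by
    intro h
    rw [h] at heq
    have : (3 : F) * (c + cq) ^ 2 = 0 := by linear_combination -heq
    rcases mul_eq_zero.mp this with h' | h'
    · exact h3 h'
    · exact hTr (pow_eq_zero_iff (by norm_num) |>.mp h')
  set z : F := (c - cq) * w ^ 2 / (c + cq) with hz
  have hz2 : z ^ 2 = 3 := by
    rw [hz, div_pow, mul_pow, ← pow_mul]
    rw [div_eq_iff (pow_ne_zero _ hTr)]
    linear_combination heq
  have hzq : z ^ (5 ^ k) = -z := by
    rw [hz, div_pow, mul_pow, hT, hd, ← pow_mul, mul_comm 2 (5 ^ k), pow_mul, hwq]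
    field_simp
  have hzne : z ≠ 0 := div_ne_zero (mul_ne_zero hdne (pow_ne_zero _ hw0)) hTr
  have hz8 : z ^ 8 = 1 := by
    have : z ^ 8 = (z ^ 2) ^ 4 := by ring
    rw [this, hz2]
    linear_combination (16 : F) * h5
  -- 8 divides 5^k - 1 since k is even
  obtain ⟨j, hj⟩ := hke
  have h8 : 8 ∣ 5 ^ k - 1 := by
    have h25 : (25 : ℕ) ^ j ≡ 1 [MOD 8] := by
      simpa using Nat.ModEq.pow j (by decide : (25 : ℕ) ≡ 1 [MOD 8])
    have h1 : 1 ≤ (25 : ℕ) ^ j := Nat.one_le_pow _ _ (by norm_num)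
    have h5k : 5 ^ k = 25 ^ j := by
      rw [hj, ← two_mul, pow_mul]; norm_num
    rw [h5k]
    exact (Nat.modEq_iff_dvd' h1).mp h25.symm
  obtain ⟨m, hm⟩ := h8
  have h1le : 1 ≤ 5 ^ k := Nat.one_le_pow _ _ (by norm_num)
  have hzz : z ^ (5 ^ k) = z := by
    have : z ^ (5 ^ k) = z ^ (5 ^ k - 1) * z := by
      rw [← pow_succ]; congr 1; omega
    rw [this, hm, pow_mul, hz8, one_pow, one_mul]
  rw [hzq] at hzz
  have h2z : (2 : F) * z = 0 := by linear_combination -hzz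
  rcases mul_eq_zero.mp h2z with h' | h'
  · have : (5 : ℕ) ∣ 2 := (CharP.cast_eq_zero_iff F 5 2).mp (by exact_mod_cast h')
    norm_num at this
  · exact hzne h'
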